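/- Decomposition bound for non-flat arcs: Let Γ be 1-Ahlfors-regular, K ⊆ Γ, and 𝒢^K a multiresolution family. For each ball B in the subfamily 𝒢₁ (balls possessing a non-almost-flat arc τ_B ∈ Λ²(B) with β̃(τ_B) > ε₂β₂(B)), the assignment B ↦ I(B) of a dyadic interval (in 𝒟⁰ ∪ 𝒟¹, via the one-third trick) containing the parameter interval of τ_B with diam(I) ≤ 6·ℓ(τ_B) is at most K₁-to-1, where K₁ depends only on the Ahlfors regularity constant and the constant A in the definition of 𝒢^K. -/

import Mathlib

open MeasureTheory Metric ENNReal

/-- Auxiliary: a finite union of finite sets of size at most `k` is finite of size at most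
`t.card * k`. -/
lemma aux_biUnion_bound {α β : Type*} (t : Finset α) (f : α → Set β)
    (k : ℕ) (h : ∀ x ∈ t, (f x).Finite ∧ (f x).ncard ≤ k) :
    (⋃ x ∈ t, f x).Finite ∧ (⋃ x ∈ t, f x).ncard ≤ t.card * k := by
  classical
  induction t using Finset.induction_on with
  | empty => simp
  | @insert x s hx ih =>
    have hx' := h x (Finset.mem_insert_self x s)
    have ih' := ih fun y hy => h y (Finset.mem_insert_of_mem hy)
    rw [Finset.set_biUnion_insert]
    refine ⟨hx'.1.union ih'.1, ?_⟩
    refine le_trans (Set.ncard_union_le _ _) ?_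
    rw [Finset.card_insert_of_notMem hx]
    calc (f x).ncard + (⋃ y ∈ s, f y).ncard ≤ k + s.card * k :=
          add_le_add hx'.2 ih'.2
      _ = (s.card + 1) * k := by ring

/-- Auxiliary counting lemma: a `2r`-separated subset of a 1-Ahlfors regular curve
`γ([0,1])` contained in a ball of radius `R` has at most `max N 1` points whenever
`C * (R + r) * C / r ≤ N`. -/
lemma aux_sep_count (C : ℝ) (hC : 0 < C) {M : Type} [MetricSpace M] (γ : ℝ → M)
    (hlip : LipschitzWith 1 γ)
    (hup : ∀ (z : M) (r : ℝ), 0 < r →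
      volume (γ ⁻¹' Metric.closedBall z r ∩ Set.Icc (0 : ℝ) 1) ≤ ENNReal.ofReal (C * r))
    (hlow : ∀ z ∈ γ '' Set.Icc (0 : ℝ) 1, ∀ r : ℝ, 0 < r →
      r < Metric.diam (γ '' Set.Icc (0 : ℝ) 1) →
      ENNReal.ofReal (r / C) ≤ volume (γ ⁻¹' Metric.closedBall z r ∩ Set.Icc (0 : ℝ) 1))
    (T : Set M) (hTΓ : T ⊆ γ '' Set.Icc (0 : ℝ) 1)
    (r R : ℝ) (hr : 0 < r) (z : M)
    (hTz : ∀ x ∈ T, dist x z ≤ R)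
    (hsep : ∀ x ∈ T, ∀ y ∈ T, x ≠ y → 2 * r < dist x y)
    (N : ℕ) (hN : C * (R + r) * C / r ≤ N) :
    T.Finite ∧ T.ncard ≤ max N 1 := by
  classical
  have hkey : ∀ F : Finset M, ↑F ⊆ T → F.card ≤ max N 1 := by
    intro F hF
    by_cases hd : Metric.diam (γ '' Set.Icc (0 : ℝ) 1) ≤ r
    · refine le_trans ?_ (le_max_right N 1)
      refine Finset.card_le_one.mpr (fun x hx y hy => ?_)
      by_contra hne
      have h1 := hsep x (hF hx) y (hF hy) hne
      have hb : Bornology.IsBounded (γ '' Set.Icc (0 : ℝ) 1) :=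
        (isCompact_Icc.image hlip.continuous).isBounded
      have h2 := Metric.dist_le_diam_of_mem hb (hTΓ (hF hx)) (hTΓ (hF hy))
      linarith
    · push_neg at hd
      rcases F.eq_empty_or_nonempty with rfl | ⟨x₀, hx₀⟩
      · simp
      have hR0 : 0 ≤ R := le_trans dist_nonneg (hTz x₀ (hF hx₀))
      set U : M → Set ℝ := fun x => γ ⁻¹' Metric.closedBall x r ∩ Set.Icc 0 1 with hU
      have hmeas : ∀ x, MeasurableSet (U x) := fun x =>
        ((Metric.isClosed_closedBall.preimage hlip.continuous).measurableSet).inter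
          measurableSet_Icc
      have hdisj : (↑F : Set M).PairwiseDisjoint U := by
        intro x hx y hy hne
        refine Set.disjoint_left.mpr (fun s hsx hsy => ?_)
        have h1 := hsep x (hF hx) y (hF hy) hne
        have hx' : dist (γ s) x ≤ r := Metric.mem_closedBall.mp hsx.1
        have hy' : dist (γ s) y ≤ r := Metric.mem_closedBall.mp hsy.1
        have h2 : dist x y ≤ 2 * r := by
          calc dist x y ≤ dist x (γ s) + dist (γ s) y := dist_triangle _ _ _
            _ ≤ r + r := by
                rw [dist_comm x (γ s)]
                exact add_le_add hx' hy'
            _ = 2 * r := by ring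
        linarith
      have h1 : ∀ x ∈ F, ENNReal.ofReal (r / C) ≤ volume (U x) := fun x hx =>
        hlow x (hTΓ (hF hx)) r hr hd
      have h2 : F.card • ENNReal.ofReal (r / C) ≤ ∑ x ∈ F, volume (U x) :=
        Finset.card_nsmul_le_sum F _ _ h1
      have h3 : ∑ x ∈ F, volume (U x) = volume (⋃ x ∈ F, U x) :=
        (measure_biUnion_finset hdisj fun x _ => hmeas x).symm
      have h4 : (⋃ x ∈ F, U x) ⊆ γ ⁻¹' Metric.closedBall z (R + r) ∩ Set.Icc (0 : ℝ) 1 := by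
        intro s hs
        simp only [Set.mem_iUnion] at hs
        obtain ⟨x, hx, hsx, hs01⟩ := hs
        refine ⟨?_, hs01⟩
        have hd1 : dist (γ s) z ≤ dist (γ s) x + dist x z := dist_triangle _ _ _
        have hd2 : dist x z ≤ R := hTz x (hF hx)
        have hd3 : dist (γ s) x ≤ r := Metric.mem_closedBall.mp hsx
        simp only [Set.mem_preimage, Metric.mem_closedBall]
        linarith
      have h5 : volume (⋃ x ∈ F, U x) ≤ ENNReal.ofReal (C * (R + r)) :=
        le_trans (measure_mono h4) (hup z (R + r) (by linarith))
      have hsum : (F.card : ℝ≥0∞) * ENNReal.ofReal (r / C) ≤ ENNReal.ofReal (C * (R + r)) := by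
        calc (F.card : ℝ≥0∞) * ENNReal.ofReal (r / C)
            = F.card • ENNReal.ofReal (r / C) := by rw [nsmul_eq_mul]
          _ ≤ ∑ x ∈ F, volume (U x) := h2
          _ = volume (⋃ x ∈ F, U x) := h3
          _ ≤ ENNReal.ofReal (C * (R + r)) := h5
      have hrc : 0 < r / C := div_pos hr hC
      have h6 : ENNReal.ofReal ((F.card : ℝ) * (r / C)) ≤ ENNReal.ofReal (C * (R + r)) := by
        rwa [ENNReal.ofReal_mul (by positivity), ENNReal.ofReal_natCast]
      have h7 : (F.card : ℝ) * (r / C) ≤ C * (R + r) :=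
        (ENNReal.ofReal_le_ofReal_iff (by positivity)).mp h6
      have h8 : (F.card : ℝ) ≤ (N : ℝ) := by
        have h9 : (F.card : ℝ) ≤ C * (R + r) / (r / C) := (le_div_iff₀ hrc).mpr h7
        rw [div_div_eq_mul_div] at h9
        linarith
      exact le_trans (Nat.cast_le.mp h8) (le_max_left N 1)
  have hfin : T.Finite := by
    by_contra hinf
    obtain ⟨t, hts, htf, htc⟩ :=
      Set.Infinite.exists_subset_ncard_eq hinf (max N 1 + 1)
    have h1 := hkey htf.toFinset (by simpa using hts)
    rw [← Set.ncard_coe_finset, Set.Finite.coe_toFinset, htc] at h1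
    omega
  refine ⟨hfin, ?_⟩
  have h1 := hkey hfin.toFinset (by simp)
  rwa [← Set.ncard_coe_finset, Set.Finite.coe_toFinset] at h1

/-- Decomposition bound for non-flat arcs: for a 1-Ahlfors-regular curve `Γ = γ([0,1])`
(with regularity constant `C`, witnessed by the arc-length parameterization `γ`), a
multiresolution family of balls `B = Ball(x, A·2⁻ⁿ)` with centers `x ∈ Xₙ` (`2⁻ⁿ`-separated
sets), and an assignment to each ball `B` (represented by the pair `p = (n,x)`) of a
parameter interval `[a p, b p]` of an arc `τ_B` of length comparable to `radius B`, lying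
in `4B` and meeting `B`, together with a dyadic interval `I(B) = ι p` (from `𝒟⁰ ∪ 𝒟¹`,
via the one-third trick) containing `[a p, b p]` and of length at most `6·ℓ(τ_B)`, the
assignment `B ↦ I(B)` is at most `K₁`-to-one, where `K₁` depends only on `C` and `A`. -/
theorem nonflat_arc_assignment_bounded (C A : ℝ) (hC : 0 < C) (hA : 1 < A) :
    ∃ K₁ : ℕ, ∀ (M : Type) [MetricSpace M], ∀ (γ : ℝ → M),
      (∀ x, γ (x + 1) = γ x) →
      LipschitzWith 1 γ →
      (∀ (z : M) (r : ℝ), 0 < r →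
        volume (γ ⁻¹' Metric.closedBall z r ∩ Set.Icc (0 : ℝ) 1) ≤
          ENNReal.ofReal (C * r)) →
      (∀ z ∈ γ '' Set.Icc (0 : ℝ) 1, ∀ r : ℝ, 0 < r →
        r < Metric.diam (γ '' Set.Icc (0 : ℝ) 1) →
        ENNReal.ofReal (r / C) ≤
          volume (γ ⁻¹' Metric.closedBall z r ∩ Set.Icc (0 : ℝ) 1)) →
      ∀ X : ℤ → Set M,
        (∀ n, X n ⊆ γ '' Set.Icc (0 : ℝ) 1) →
        (∀ n : ℤ, ∀ x ∈ X n, ∀ y ∈ X n, x ≠ y → (2 : ℝ) ^ (-n) < dist x y) →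
        ∀ S : Set (ℤ × M), (∀ p ∈ S, p.2 ∈ X p.1) →
          ∀ (a b : ℤ × M → ℝ) (ι : ℤ × M → ℕ × ℕ × Bool),
            (∀ p ∈ S, a p < b p) →
            (∀ p ∈ S, A * (2 : ℝ) ^ (-p.1) / C ≤ b p - a p) →
            (∀ p ∈ S, b p - a p ≤ C * (A * (2 : ℝ) ^ (-p.1))) →
            (∀ p ∈ S, γ '' Set.Icc (a p) (b p) ⊆
              Metric.closedBall p.2 (4 * A * (2 : ℝ) ^ (-p.1))) →
            (∀ p ∈ S, (γ '' Set.Icc (a p) (b p) ∩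
              Metric.closedBall p.2 (A * (2 : ℝ) ^ (-p.1))).Nonempty) →
            (∀ p ∈ S, Set.Icc (a p) (b p) ⊆
              Set.Icc
                ((if (ι p).2.2 then (1 : ℝ) / 3 else 0) + ((ι p).2.1 : ℝ) / 2 ^ (ι p).1)
                ((if (ι p).2.2 then (1 : ℝ) / 3 else 0) +
                  (((ι p).2.1 : ℝ) + 1) / 2 ^ (ι p).1)) →
            (∀ p ∈ S, (2 : ℝ) ^ (-((ι p).1 : ℤ)) ≤ 6 * (b p - a p)) →
            ∀ I : ℕ × ℕ × Bool,
              {p ∈ S | ι p = I}.Finite ∧ {p ∈ S | ι p = I}.ncard ≤ K₁ := by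
  classical
  have hA0 : 0 < A := lt_trans one_pos hA
  obtain ⟨G, hG⟩ := pow_unbounded_of_one_lt (R := ℝ) (6 * C * A + C / A) one_lt_two
  have h6CA : 0 < 6 * C * A := by positivity
  have hCA : 0 < C / A := by positivity
  have hG1 : 6 * C * A < 2 ^ G := by linarith
  have hG2 : C / A < 2 ^ G := by linarith
  set N : ℕ := ⌈C * C * (2 * (A + 6 * C * A) + 1)⌉₊ with hNdef
  refine ⟨(2 * G + 1) * (max N 1), ?_⟩
  intro M _ γ hper hlip hup hlow X hXΓ hXsep S hSX a b ι hab hlb hub hsub4 hmeet hsubI h6 I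
  obtain ⟨m, j, fl⟩ := I
  set c : ℝ := (if fl then (1 : ℝ) / 3 else 0) + (j : ℝ) / 2 ^ m with hc
  set Fib : Set (ℤ × M) := {p ∈ S | ι p = (m, j, fl)} with hFibdef
  have h2m : (2 : ℝ) ^ (-(m : ℤ)) = 1 / 2 ^ m := by
    rw [zpow_neg, zpow_natCast, one_div]
  have hIcc_eq : Set.Icc c (c + (2 : ℝ) ^ (-(m : ℤ))) =
      Set.Icc ((if fl then (1 : ℝ) / 3 else 0) + (j : ℝ) / 2 ^ m)
        ((if fl then (1 : ℝ) / 3 else 0) + ((j : ℝ) + 1) / 2 ^ m) := by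
    rw [hc, h2m]
    have h2pos : (0 : ℝ) < 2 ^ m := by positivity
    field_simp
    ring
  -- basic facts about elements of the fiber
  have hfacts : ∀ p ∈ Fib, ((m : ℤ) - G ≤ p.1 ∧ p.1 ≤ (m : ℤ) + G) ∧
      dist p.2 (γ c) ≤ (A + 6 * C * A) * (2 : ℝ) ^ (-p.1) := by
    intro p hp
    obtain ⟨hpS, hpι⟩ := hp
    have hsubp : Set.Icc (a p) (b p) ⊆ Set.Icc c (c + (2 : ℝ) ^ (-(m : ℤ))) := by
      rw [hIcc_eq]
      have h1 := hsubI p hpS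
      rw [hpι] at h1
      exact h1
    have hab' := hab p hpS
    have haIn := hsubp (Set.left_mem_Icc.mpr hab'.le)
    have hbIn := hsubp (Set.right_mem_Icc.mpr hab'.le)
    have hlen : b p - a p ≤ (2 : ℝ) ^ (-(m : ℤ)) := by
      have h1 := haIn.1
      have h2 := hbIn.2
      linarith
    have hlb' := hlb p hpS
    have hub' := hub p hpS
    have h6' := h6 p hpS
    rw [hpι] at h6'
    have h6'' : (2 : ℝ) ^ (-(m : ℤ)) ≤ 6 * (b p - a p) := h6'
    have hs_pos : (0 : ℝ) < (2 : ℝ) ^ (-p.1) := by positivity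
    have hm_pos : (0 : ℝ) < (2 : ℝ) ^ (-(m : ℤ)) := by positivity
    constructor
    · constructor
      · -- lower bound on p.1
        have h1 : A * (2 : ℝ) ^ (-p.1) ≤ (2 : ℝ) ^ (-(m : ℤ)) * C := by
          have h2 := le_trans hlb' hlen
          rwa [div_le_iff₀ hC] at h2
        have h2 : (2 : ℝ) ^ (-p.1) ≤ C / A * (2 : ℝ) ^ (-(m : ℤ)) := by
          rw [div_mul_eq_mul_div, le_div_iff₀ hA0]
          nlinarith
        have h3 : (2 : ℝ) ^ (-p.1) < (2 : ℝ) ^ ((G : ℤ) + -(m : ℤ)) := by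
          calc (2 : ℝ) ^ (-p.1) ≤ C / A * (2 : ℝ) ^ (-(m : ℤ)) := h2
            _ < 2 ^ G * (2 : ℝ) ^ (-(m : ℤ)) := mul_lt_mul_of_pos_right hG2 hm_pos
            _ = (2 : ℝ) ^ ((G : ℤ) + -(m : ℤ)) := by
                rw [zpow_add₀ (by norm_num : (2 : ℝ) ≠ 0), zpow_natCast]
        have h4 : -p.1 < (G : ℤ) + -(m : ℤ) :=
          (zpow_lt_zpow_iff_right₀ (by norm_num : (1 : ℝ) < 2)).mp h3
        omega
      · -- upper bound on p.1
        have h1 : (2 : ℝ) ^ (-(m : ℤ)) ≤ 6 * C * A * (2 : ℝ) ^ (-p.1) := by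
          calc (2 : ℝ) ^ (-(m : ℤ)) ≤ 6 * (b p - a p) := h6''
            _ ≤ 6 * (C * (A * (2 : ℝ) ^ (-p.1))) := by linarith
            _ = 6 * C * A * (2 : ℝ) ^ (-p.1) := by ring
        have h3 : (2 : ℝ) ^ (-(m : ℤ)) < (2 : ℝ) ^ ((G : ℤ) + -p.1) := by
          calc (2 : ℝ) ^ (-(m : ℤ)) ≤ 6 * C * A * (2 : ℝ) ^ (-p.1) := h1
            _ < 2 ^ G * (2 : ℝ) ^ (-p.1) := mul_lt_mul_of_pos_right hG1 hs_pos
            _ = (2 : ℝ) ^ ((G : ℤ) + -p.1) := by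
                rw [zpow_add₀ (by norm_num : (2 : ℝ) ≠ 0), zpow_natCast]
        have h4 : -(m : ℤ) < (G : ℤ) + -p.1 :=
          (zpow_lt_zpow_iff_right₀ (by norm_num : (1 : ℝ) < 2)).mp h3
        omega
    · -- center close to γ c
      obtain ⟨w, ⟨t, ht, rfl⟩, hwB⟩ := hmeet p hpS
      have htc : t ∈ Set.Icc c (c + (2 : ℝ) ^ (-(m : ℤ))) := hsubp ht
      have hdtc : dist (γ t) (γ c) ≤ (2 : ℝ) ^ (-(m : ℤ)) := by
        have h1 := hlip.dist_le_mul t c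
        have h2 : dist t c ≤ (2 : ℝ) ^ (-(m : ℤ)) := by
          rw [Real.dist_eq, abs_le]
          constructor
          · linarith [htc.1]
          · linarith [htc.2]
        calc dist (γ t) (γ c) ≤ 1 * dist t c := h1
          _ ≤ (2 : ℝ) ^ (-(m : ℤ)) := by linarith
      have hwB' : dist (γ t) p.2 ≤ A * (2 : ℝ) ^ (-p.1) := Metric.mem_closedBall.mp hwB
      have hmb : (2 : ℝ) ^ (-(m : ℤ)) ≤ 6 * C * A * (2 : ℝ) ^ (-p.1) := by
        calc (2 : ℝ) ^ (-(m : ℤ)) ≤ 6 * (b p - a p) := h6''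
          _ ≤ 6 * (C * (A * (2 : ℝ) ^ (-p.1))) := by linarith
          _ = 6 * C * A * (2 : ℝ) ^ (-p.1) := by ring
      calc dist p.2 (γ c) ≤ dist p.2 (γ t) + dist (γ t) (γ c) := dist_triangle _ _ _
        _ ≤ A * (2 : ℝ) ^ (-p.1) + (2 : ℝ) ^ (-(m : ℤ)) := by
            rw [dist_comm p.2 (γ t)]
            exact add_le_add hwB' hdtc
        _ ≤ A * (2 : ℝ) ^ (-p.1) + 6 * C * A * (2 : ℝ) ^ (-p.1) := by linarith
        _ = (A + 6 * C * A) * (2 : ℝ) ^ (-p.1) := by ring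
  -- the slices
  set Tn : ℤ → Set M := fun n => {x | (n, x) ∈ Fib} with hTndef
  have hTn : ∀ n : ℤ, (Tn n).Finite ∧ (Tn n).ncard ≤ max N 1 := by
    intro n
    have hs_pos : (0 : ℝ) < (2 : ℝ) ^ (-n) := by positivity
    refine aux_sep_count C hC γ hlip hup hlow (Tn n) ?_ ((2 : ℝ) ^ (-n) / 2)
      ((A + 6 * C * A) * (2 : ℝ) ^ (-n)) (by positivity) (γ c) ?_ ?_ N ?_
    · intro x hx
      exact hXΓ n (hSX _ hx.1)
    · intro x hx
      exact (hfacts _ hx).2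
    · intro x hx y hy hxy
      have h1 := hXsep n x (hSX _ hx.1) y (hSX _ hy.1) hxy
      linarith
    · have heq : C * ((A + 6 * C * A) * (2 : ℝ) ^ (-n) + (2 : ℝ) ^ (-n) / 2) * C /
          ((2 : ℝ) ^ (-n) / 2) = C * C * (2 * (A + 6 * C * A) + 1) := by
        field_simp
      rw [heq]
      exact Nat.le_ceil _
  set t : Finset ℤ := Finset.Icc ((m : ℤ) - G) ((m : ℤ) + G) with htdef
  have hcover : Fib ⊆ ⋃ n ∈ t, Prod.mk n '' Tn n := by
    intro p hp
    simp only [Set.mem_iUnion]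
    refine ⟨p.1, ?_, p.2, hp, rfl⟩
    rw [htdef, Finset.mem_Icc]
    exact (hfacts p hp).1
  have hbig := aux_biUnion_bound t (fun n => Prod.mk n '' Tn n) (max N 1) (fun n _ =>
    ⟨(hTn n).1.image _, le_trans (le_of_eq (Set.ncard_image_of_injective _
      (Prod.mk_right_injective n))) (hTn n).2⟩)
  have hcard : t.card = 2 * G + 1 := by
    rw [htdef, Int.card_Icc]
    omega
  refine ⟨hbig.1.subset hcover, ?_⟩
  calc Fib.ncard ≤ (⋃ n ∈ t, Prod.mk n '' Tn n).ncard := Set.ncard_le_ncard hcover hbig.1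
    _ ≤ t.card * max N 1 := hbig.2
    _ = (2 * G + 1) * max N 1 := by rw [hcard]
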